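/- Let K be a finite collection of open simplices in ℝ^m such that (i) every face of a simplex of K belongs to K, and (ii) every pair of distinct simplices of K are disjoint. Then for any two simplices σ, τ ∈ K with closures meeting, closure(σ) ∩ closure(τ) equals the closed face of σ spanned by those vertices of σ that are also vertices of τ (so K is a closed simplicial complex). -/

import Mathlib

/-- The open simplex spanned by a finite set `V` of points: strictly positive barycentric
combinations of the elements of `V`. -/
def openSimplexOf {m : ℕ} (V : Finset (Fin m → ℝ)) : Set (Fin m → ℝ) :=
  {x | ∃ w : (Fin m → ℝ) → ℝ, (∀ v ∈ V, 0 < w v) ∧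
    ∑ v ∈ V, w v = 1 ∧ ∑ v ∈ V, w v • v = x}

lemma openSimplex_subset_convexHull {m : ℕ} (V : Finset (Fin m → ℝ)) :
    openSimplexOf V ⊆ convexHull ℝ (V : Set (Fin m → ℝ)) := by
  rintro x ⟨w, hpos, hsum, hx⟩
  rw [Finset.convexHull_eq]
  refine ⟨w, fun v hv => (hpos v hv).le, hsum, ?_⟩
  rw [Finset.centerMass_eq_of_sum_1 _ _ hsum]
  simpa using hx

lemma closure_openSimplex {m : ℕ} (V : Finset (Fin m → ℝ)) (hV : V.Nonempty) :
    closure (openSimplexOf V) = convexHull ℝ (V : Set (Fin m → ℝ)) := by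
  apply subset_antisymm
  · exact closure_minimal (openSimplex_subset_convexHull V)
      (V.finite_toSet.isClosed_convexHull (𝕜 := ℝ))
  · intro x hx
    rw [Finset.convexHull_eq] at hx
    obtain ⟨w, hw0, hw1, hwx⟩ := hx
    rw [Finset.centerMass_eq_of_sum_1 _ _ hw1] at hwx
    simp only [id] at hwx
    have hcard : (0:ℝ) < (V.card : ℝ) := by
      exact_mod_cast Finset.card_pos.mpr hV
    set b : Fin m → ℝ := ∑ v ∈ V, ((V.card : ℝ)⁻¹) • v with hb
    rw [mem_closure_iff_seq_limit]
    refine ⟨fun k => x + (1/(k+1:ℝ)) • (b - x), ?_, ?_⟩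
    · intro k
      have hε0 : (0:ℝ) < 1/(k+1:ℝ) := by positivity
      have hε1 : 1/(k+1:ℝ) ≤ 1 := by
        rw [div_le_one (by positivity)]; linarith [Nat.cast_nonneg (α := ℝ) k]
      set ε := 1/(k+1:ℝ)
      refine ⟨fun v => ε * (V.card : ℝ)⁻¹ + (1-ε) * w v, ?_, ?_, ?_⟩
      · intro v hv
        have := hw0 v hv
        have : (0:ℝ) ≤ (1-ε) * w v := mul_nonneg (by linarith) this
        have hp : (0:ℝ) < ε * (V.card : ℝ)⁻¹ := by positivity
        linarith
      · rw [Finset.sum_add_distrib, ← Finset.mul_sum, ← Finset.mul_sum, hw1,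
          Finset.sum_const, nsmul_eq_mul, mul_inv_cancel₀ (ne_of_gt hcard)]
        ring
      · have key : ∑ v ∈ V, (ε * (V.card : ℝ)⁻¹ + (1-ε) * w v) • v
            = ε • b + (1-ε) • (∑ v ∈ V, w v • v) := by
          rw [hb, Finset.smul_sum, Finset.smul_sum, ← Finset.sum_add_distrib]
          exact Finset.sum_congr rfl (fun v _ => by rw [add_smul, ← smul_smul, ← smul_smul])
        rw [key, hwx]
        module
    · have h0 : Filter.Tendsto (fun k : ℕ => 1/(k+1:ℝ)) Filter.atTop (nhds 0) :=
        tendsto_one_div_add_atTop_nhds_zero_nat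
      have := (h0.smul_const (b - x)).const_add x
      simpa using this

lemma exists_openFace {m : ℕ} {V : Finset (Fin m → ℝ)} {x : Fin m → ℝ}
    (hx : x ∈ convexHull ℝ (V : Set (Fin m → ℝ))) :
    ∃ V' : Finset (Fin m → ℝ), V' ⊆ V ∧ V'.Nonempty ∧ x ∈ openSimplexOf V' := by
  rw [Finset.convexHull_eq] at hx
  obtain ⟨w, hw0, hw1, hwx⟩ := hx
  rw [Finset.centerMass_eq_of_sum_1 _ _ hw1] at hwx
  simp only [id] at hwx
  set V' := V.filter (fun v => 0 < w v) with hV'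
  have hzero : ∀ v ∈ V, v ∉ V' → w v = 0 := by
    intro v hv hnv
    rw [hV', Finset.mem_filter] at hnv
    push_neg at hnv
    exact le_antisymm (hnv hv) (hw0 v hv)
  have hsum : ∑ v ∈ V', w v = 1 := by
    rw [← hw1]
    exact (Finset.sum_subset (Finset.filter_subset _ _)
      (fun v hv hnv => hzero v hv hnv)).symm ▸ rfl
  have hsum' : ∑ v ∈ V', w v = ∑ v ∈ V, w v :=
    Finset.sum_subset (Finset.filter_subset _ _) (fun v hv hnv => hzero v hv hnv)
  have hsum2 : ∑ v ∈ V', w v • v = x := by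
    rw [← hwx]
    exact Finset.sum_subset (Finset.filter_subset _ _)
      (fun v hv hnv => by rw [hzero v hv hnv, zero_smul])
  refine ⟨V', Finset.filter_subset _ _, ?_, w, ?_, hsum' ▸ hw1, hsum2⟩
  · rw [Finset.nonempty_iff_ne_empty]
    intro h
    rw [h, Finset.sum_empty] at hsum'
    rw [hw1] at hsum'; norm_num at hsum'
  · intro v hv; exact (Finset.mem_filter.mp hv).2

/-- let `K` be a finite collection of open simplices (given by their vertex
sets, which are nonempty and affinely independent) such that every face of a simplex of
`K` is in `K` and distinct simplices of `K` are disjoint. Then for any `σ, τ ∈ K`,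
`closure σ ∩ closure τ` is the closed face spanned by the common vertices,
i.e. `convexHull ℝ (Vert σ ∩ Vert τ)` (so `K` is a closed simplicial complex). -/
theorem stmt_5 (m : ℕ) (K : Set (Finset (Fin m → ℝ))) (hKfin : K.Finite)
    (hne : ∀ V ∈ K, V.Nonempty)
    (hindep : ∀ V ∈ K, AffineIndependent ℝ (fun v : {x // x ∈ V} => (v : Fin m → ℝ)))
    (hfaces : ∀ V ∈ K, ∀ W : Finset (Fin m → ℝ), W ⊆ V → W.Nonempty → W ∈ K)
    (hdisj : ∀ V ∈ K, ∀ W ∈ K, V ≠ W → openSimplexOf V ∩ openSimplexOf W = ∅) :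
    ∀ V ∈ K, ∀ W ∈ K,
      closure (openSimplexOf V) ∩ closure (openSimplexOf W)
        = convexHull ℝ ((V ∩ W : Finset (Fin m → ℝ)) : Set (Fin m → ℝ)) := by
  intro V hV W hW
  rw [closure_openSimplex V (hne V hV), closure_openSimplex W (hne W hW)]
  apply subset_antisymm
  · rintro x ⟨hxV, hxW⟩
    obtain ⟨V', hV'sub, hV'ne, hxV'⟩ := exists_openFace hxV
    obtain ⟨W', hW'sub, hW'ne, hxW'⟩ := exists_openFace hxW
    have hV'K : V' ∈ K := hfaces V hV V' hV'sub hV'ne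
    have hW'K : W' ∈ K := hfaces W hW W' hW'sub hW'ne
    have heq : V' = W' := by
      by_contra h
      have := hdisj V' hV'K W' hW'K h
      exact absurd this (by rw [Set.eq_empty_iff_forall_notMem] at this ⊢; intro _; exact this x ⟨hxV', hxW'⟩)
    have hsub : V' ⊆ V ∩ W := Finset.subset_inter hV'sub (heq ▸ hW'sub)
    exact convexHull_mono (by exact_mod_cast hsub) (openSimplex_subset_convexHull V' hxV')
  · intro x hx
    constructor
    · exact convexHull_mono (by simp [Finset.coe_inter]) hx
    · exact convexHull_mono (by simp [Finset.coe_inter]) hx
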